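/- Under the Protocol 1 model: for any attack (U_E, {U_F^{(r)}}) satisfying the no-error conditions (T'), (Z') and (X'), with E_i and F_{s,i} the associated unit vectors, if two bitstrings i and i' agree at every position outside the range of an injective map s : Fin r ↪ Fin N (i.e. i∘s̄ = i'∘s̄), then F_{s,i} = F_{s,i'}. -/

import Mathlib

/-!
Protocol 1 model (randomization-based semi-quantum key distribution):
see Boyer, Gelles, Kenigsberg, Mor, "Semi-Quantum Key Distribution".
-/

namespace SQKD1

/-- Bitstrings of length `N`. -/
abbrev Bits (N : ℕ) := Fin N → Bool

/-- The space attacked by `U_E`: Eve's probe together with the `N` travelling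
qubits. -/
abbrev HE (N d : ℕ) := EuclideanSpace ℂ (Fin d × Bits N)

/-- The space attacked by `U_F^{(r)}`: Eve's probe together with the `r`
reflected qubits. -/
abbrev HF (d r : ℕ) := EuclideanSpace ℂ (Fin d × (Fin r → Bool))

/-- Hamming weight of a bitstring. -/
def wt {n : ℕ} (y : Fin n → Bool) : ℕ := (Finset.univ.filter fun k => y k = true).card

/-- The elementary tensor `v ⊗ δ_u` of a vector `v` of Eve's probe space with a
standard basis vector `δ_u`. -/
noncomputable def tprod {d : ℕ} {ι : Type*} [DecidableEq ι]
    (v : EuclideanSpace ℂ (Fin d)) (u : ι) : EuclideanSpace ℂ (Fin d × ι) :=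
  WithLp.toLp 2 (fun p : Fin d × ι => if p.2 = u then v p.1 else 0)

/-- Condition (T'): no error on TEST bits; `U_E (ε₀ ⊗ δ_i) = E_i ⊗ δ_i`. -/
def CondT {N d : ℕ} (hd : 0 < d) (UE : HE N d ≃ₗᵢ[ℂ] HE N d)
    (E : Bits N → EuclideanSpace ℂ (Fin d)) : Prop :=
  ∀ i : Bits N,
    UE (EuclideanSpace.single ((⟨0, hd⟩ : Fin d), i) 1) = tprod (E i) i

/-- Condition (Z'): no error on Z-CTRL bits;
`U_F^{(r)} (E_i ⊗ δ_{i∘s}) = F_{s,i} ⊗ δ_{i∘s}`. -/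
def CondZ {N d : ℕ} (UF : (r : ℕ) → r ≤ N → (HF d r ≃ₗᵢ[ℂ] HF d r))
    (E : Bits N → EuclideanSpace ℂ (Fin d))
    (F : (r : ℕ) → r ≤ N → (Fin r ↪ Fin N) → Bits N → EuclideanSpace ℂ (Fin d)) :
    Prop :=
  ∀ (r : ℕ) (hr : r ≤ N) (s : Fin r ↪ Fin N) (i : Bits N),
    UF r hr (tprod (E i) (fun p => i (s p))) = tprod (F r hr s i) (fun p => i (s p))

/-- Condition (X'): no error on X-CTRL bits.  For `k := s p`, `i k = false` and
`i'` equal to `i` with bit `k` flipped, the state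
`Φ = (1/√2)(F_{s,i} ⊗ δ_{i∘s} + F_{s,i'} ⊗ δ_{i'∘s})` has, at every index
`(a,t)`, the same coefficient as at `(a, t')`, where `t'` is `t` with bit `p`
flipped. -/
def CondX {N d : ℕ}
    (F : (r : ℕ) → r ≤ N → (Fin r ↪ Fin N) → Bits N → EuclideanSpace ℂ (Fin d)) :
    Prop :=
  ∀ (r : ℕ) (hr : r ≤ N) (s : Fin r ↪ Fin N) (p : Fin r) (i : Bits N),
    i (s p) = false →
      ∀ (a : Fin d) (t : Fin r → Bool),
        ((Real.sqrt 2 : ℂ)⁻¹ •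
            (tprod (F r hr s i) (fun q => i (s q)) +
              tprod (F r hr s (Function.update i (s p) true))
                (fun q => Function.update i (s p) true (s q)))) (a, t) =
        ((Real.sqrt 2 : ℂ)⁻¹ •
            (tprod (F r hr s i) (fun q => i (s q)) +
              tprod (F r hr s (Function.update i (s p) true))
                (fun q => Function.update i (s p) true (s q))))
          (a, Function.update t p (!(t p)))

/-- **Lemma 1 of the paper.** For an attack with no error on TEST
and CTRL bits, if two bitstrings `i`, `i'` agree at every position outside the
range of `s`, then `F_{s,i} = F_{s,i'}`. -/
theorem protocol1_F_depends_only_on_kept_bits (N d : ℕ) (hd : 0 < d)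
    (UE : HE N d ≃ₗᵢ[ℂ] HE N d)
    (UF : (r : ℕ) → r ≤ N → (HF d r ≃ₗᵢ[ℂ] HF d r))
    (E : Bits N → EuclideanSpace ℂ (Fin d))
    (F : (r : ℕ) → r ≤ N → (Fin r ↪ Fin N) → Bits N → EuclideanSpace ℂ (Fin d))
    (hT : CondT hd UE E) (hZ : CondZ UF E F) (hX : CondX F) :
    ∀ (r : ℕ) (hr : r ≤ N) (s : Fin r ↪ Fin N) (i i' : Bits N),
      (∀ k : Fin N, k ∉ Set.range ⇑s → i k = i' k) →
      F r hr s i = F r hr s i' := by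
  intro r hr s i i' hagree
  -- single-flip lemma
  have flip : ∀ (j : Bits N) (p : Fin r), j (s p) = false →
      F r hr s j = F r hr s (Function.update j (s p) true) := by
    intro j p hj
    ext a
    have hX' := hX r hr s p j hj a (fun q => j (s q))
    set j' := Function.update j (s p) true with hj'def
    have hj'p : j' (s p) = true := by simp [hj'def]
    have hne : (fun q => j (s q)) ≠ (fun q => j' (s q)) := by
      intro h
      have := congrFun h p
      rw [hj'p, hj] at this
      exact Bool.false_ne_true this
    have hupd : Function.update (fun q => j (s q)) p (!(j (s p))) =
        (fun q => j' (s q)) := by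
      funext q
      by_cases hq : q = p
      · subst hq; simp [Function.update_self, hj, hj'p]
      · rw [Function.update_of_ne hq, hj'def,
          Function.update_of_ne (fun h => hq (s.injective h))]
    rw [show (!((fun q => j (s q)) p)) = !(j (s p)) from rfl] at hX'
    rw [hupd] at hX'
    simp only [tprod, PiLp.smul_apply, PiLp.add_apply, PiLp.toLp_apply, if_pos rfl,
      if_neg hne, if_neg (Ne.symm hne)] at hX'
    have hc : ((Real.sqrt 2 : ℂ)⁻¹) ≠ 0 := by
      simp [Real.sqrt_eq_zero']
    have := mul_left_cancel₀ hc (by simpa [smul_eq_mul] using hX')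
    simpa using this
  -- F s j = F s (j zeroed on range s)
  have key : ∀ (n : ℕ) (j : Bits N),
      (Finset.univ.filter fun p => j (s p) = true).card = n →
      F r hr s j = F r hr s (fun k => if ∃ p, s p = k then false else j k) := by
    intro n
    induction n with
    | zero =>
      intro j hcard
      have hall : ∀ p : Fin r, j (s p) = false := by
        intro p
        by_contra h
        have hmem : p ∈ Finset.univ.filter fun p => j (s p) = true := by
          simp [Bool.not_eq_false] at h
          simp [h]
        rw [Finset.card_eq_zero] at hcard
        simp [hcard] at hmem
      have hjeq : (fun k => if ∃ p, s p = k then false else j k) = j := by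
        funext k
        split
        · next h => obtain ⟨p, rfl⟩ := h; exact (hall p).symm
        · rfl
      rw [hjeq]
    | succ n ih =>
      intro j hcard
      have hpos : 0 < (Finset.univ.filter fun p => j (s p) = true).card := by
        omega
      obtain ⟨p, hp⟩ := Finset.card_pos.mp hpos
      have hpj : j (s p) = true := by simpa using hp
      set j0 := Function.update j (s p) false with hj0def
      have hj0p : j0 (s p) = false := by simp [hj0def]
      have hback : Function.update j0 (s p) true = j := by
        funext k
        by_cases hk : k = s p
        · subst hk; simp [Function.update_self, hpj]
        · rw [Function.update_of_ne hk, hj0def, Function.update_of_ne hk]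
      have hflip := flip j0 p hj0p
      rw [hback] at hflip
      have hfilter : (Finset.univ.filter fun q => j0 (s q) = true) =
          (Finset.univ.filter fun q => j (s q) = true).erase p := by
        ext q
        simp only [Finset.mem_filter, Finset.mem_erase, Finset.mem_univ, true_and]
        constructor
        · intro hq
          by_cases hqp : q = p
          · subst hqp; rw [hj0p] at hq; exact absurd hq Bool.false_ne_true
          · refine ⟨hqp, ?_⟩
            rwa [hj0def, Function.update_of_ne (fun h => hqp (s.injective h))] at hq
        · rintro ⟨hqp, hq⟩
          rwa [hj0def, Function.update_of_ne (fun h => hqp (s.injective h))]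
      have hcard0 : (Finset.univ.filter fun q => j0 (s q) = true).card = n := by
        rw [hfilter, Finset.card_erase_of_mem hp, hcard]; omega
      have hzero : (fun k => if ∃ q, s q = k then false else j0 k) =
          (fun k => if ∃ q, s q = k then false else j k) := by
        funext k
        split
        · rfl
        · next h =>
          rw [hj0def, Function.update_of_ne (fun hk => h ⟨p, hk.symm⟩)]
      rw [← hflip, ih j0 hcard0, hzero]
  have h1 := key _ i rfl
  have h2 := key _ i' rfl
  rw [h1, h2]
  have : (fun k => if ∃ p, s p = k then false else i k) =
      (fun k => if ∃ p, s p = k then false else i' k) := by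
    funext k
    split
    · rfl
    · next h => exact hagree k (fun ⟨p, hp⟩ => h ⟨p, hp⟩)
  rw [this]

end SQKD1
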